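/- Let A be a skew-symmetric endomorphism of a 2m-dimensional Euclidean space (k₁, g) commuting with an orthogonal complex structure J on k₁, and let H be another skew-symmetric endomorphism of (k₁,g) commuting with J such that AᵗH + HA = 0 and H has rank 2 (equivalently, the 2-form η = g(H·,·) satisfies η∧η = 0 and η ≠ 0). Then A and H commute, and there exists a unitary basis e₂,…,e₂ₘ₊₁ of (k₁, J, g) with J e₂ₗ = e₂ₗ₊₁ in which A = diag(C_{b₁},…,C_{b_m}) and H = diag(C_{-c}, 0, …, 0) for some real b₁,…,b_m and nonzero c, where C_b denotes the 2×2 matrix with rows (0, b), (-b, 0). -/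

import Mathlib

open scoped RealInnerProductSpace

open Module Submodule

section Aux

variable {k : Type*} [NormedAddCommGroup k] [InnerProductSpace ℝ k] [FiniteDimensional ℝ k]

lemma mem_orth_span_pair_iff (f g x : k) :
    x ∈ (Submodule.span ℝ ({f, g} : Set k))ᗮ ↔ ⟪f, x⟫ = 0 ∧ ⟪g, x⟫ = 0 := by
  constructor
  · intro h
    rw [Submodule.mem_orthogonal] at h
    exact ⟨h f (Submodule.subset_span (by simp)), h g (Submodule.subset_span (by simp))⟩
  · rintro ⟨h1, h2⟩
    rw [Submodule.mem_orthogonal]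
    intro u hu
    rcases Submodule.mem_span_pair.mp hu with ⟨a, b, rfl⟩
    rw [inner_add_left, real_inner_smul_left, real_inner_smul_left, h1, h2]
    ring

lemma orthonormal_pair_span_finrank {f g : k} (hf : ‖f‖ = 1) (hg : ‖g‖ = 1)
    (hfg : ⟪f, g⟫ = 0) :
    finrank ℝ (Submodule.span ℝ ({f, g} : Set k)) = 2 := by
  have hon : Orthonormal ℝ (![f, g]) := by
    rw [orthonormal_iff_ite]
    intro i j
    fin_cases i <;> fin_cases j <;>
      simp [hfg, real_inner_comm f g, real_inner_self_eq_norm_sq, hf, hg]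
  have : Set.range ![f, g] = ({f, g} : Set k) := by
    ext x; simp [Fin.exists_fin_two, or_comm]
  rw [← this, finrank_span_eq_card hon.linearIndependent, Fintype.card_fin]

/-- Key induction: simultaneous normal form for skew `A` commuting with `J`,
on a `J,A`-invariant subspace of dimension `2n`. -/
lemma aux_normal_form (J A : k →ₗ[ℝ] k)
    (hJ2 : ∀ x, J (J x) = -x)
    (hJorth : ∀ x y : k, ⟪J x, J y⟫ = ⟪x, y⟫)
    (hAskew : ∀ x y : k, ⟪A x, y⟫ = -⟪x, A y⟫)
    (hAJ : ∀ x, A (J x) = J (A x)) :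
    ∀ (n : ℕ) (W : Submodule ℝ k), finrank ℝ W = 2 * n →
      (∀ x ∈ W, J x ∈ W) → (∀ x ∈ W, A x ∈ W) →
      ∃ (e : Fin n × Bool → k) (bv : Fin n → ℝ), Orthonormal ℝ e ∧ (∀ i, e i ∈ W) ∧
        (∀ l, J (e (l, false)) = e (l, true)) ∧
        (∀ l, A (e (l, false)) = -(bv l) • e (l, true) ∧
          A (e (l, true)) = bv l • e (l, false)) := by
  have hJx : ∀ x : k, ⟪J x, x⟫ = 0 := by
    intro x
    have h1 : ⟪J (J x), J x⟫ = ⟪J x, x⟫ := hJorth (J x) x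
    rw [hJ2, inner_neg_left] at h1
    have h2 : ⟪x, J x⟫ = ⟪J x, x⟫ := real_inner_comm (J x) x
    linarith
  have hJnorm : ∀ x : k, ‖J x‖ = ‖x‖ := by
    intro x
    have := hJorth x x
    rw [real_inner_self_eq_norm_sq, real_inner_self_eq_norm_sq] at this
    nlinarith [norm_nonneg (J x), norm_nonneg x]
  intro n
  induction n with
  | zero =>
    intro W _ _ _
    refine ⟨fun i => i.1.elim0, fun i => i.elim0, ⟨fun i => i.1.elim0, fun {i} => i.1.elim0⟩,
      fun i => i.1.elim0, fun l => l.elim0, fun l => l.elim0⟩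
  | succ n ih =>
    intro W hWdim hJW hAW
    -- restrict J and A to W
    set Jr : W →ₗ[ℝ] W := J.restrict hJW with hJr
    set Ar : W →ₗ[ℝ] W := A.restrict hAW with hAr
    set S : W →ₗ[ℝ] W := Jr ∘ₗ Ar with hS
    have hScoe : ∀ x : W, (S x : k) = J (A x) := fun x => rfl
    have hSsymm : S.IsSymmetric := by
      intro x y
      rw [Submodule.coe_inner, Submodule.coe_inner, hScoe, hScoe]
      have h1 : ⟪J (J (A (x : k))), J (y : k)⟫ = ⟪J (A (x : k)), (y : k)⟫ :=
        hJorth (J (A (x : k))) (y : k)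
      rw [hJ2, inner_neg_left] at h1
      rw [← h1, hAskew, neg_neg, hAJ]
    have hWn : finrank ℝ W = 2 * (n + 1) := hWdim
    obtain B := hSsymm.eigenvectorBasis hWn
    set i0 : Fin (2 * (n + 1)) := ⟨0, by omega⟩ with hi0
    set fv : W := hSsymm.eigenvectorBasis hWn i0 with hfv
    set μ : ℝ := hSsymm.eigenvalues hWn i0 with hμ
    have heig : S fv = μ • fv := by
      exact_mod_cast hSsymm.apply_eigenvectorBasis hWn i0
    set f : k := (fv : k) with hf
    have hfW : f ∈ W := fv.2
    have hfnorm : ‖f‖ = 1 := by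
      have := (hSsymm.eigenvectorBasis hWn).orthonormal.1 i0
      exact this
    have hJAf : J (A f) = μ • f := by
      have := congrArg (Subtype.val) heig
      simpa [hScoe] using this
    have hAf : A f = -μ • J f := by
      have := congrArg J hJAf
      rw [hJ2, map_smul] at this
      have := congrArg Neg.neg this
      rw [neg_neg] at this
      rw [this, neg_smul]
    have hAJf : A (J f) = μ • f := by
      rw [hAJ, hAf, map_smul, neg_smul, hJ2, smul_neg, neg_neg]
    have hJfW : J f ∈ W := hJW f hfW
    have hJfnorm : ‖J f‖ = 1 := by rw [hJnorm, hfnorm]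
    have hfJf : ⟪f, J f⟫ = 0 := by rw [real_inner_comm]; exact hJx f
    -- the 2-plane U and its relative complement
    set U : Submodule ℝ k := Submodule.span ℝ ({f, J f} : Set k) with hU
    have hUle : U ≤ W := by
      rw [hU, Submodule.span_le]
      rintro x hx
      rcases hx with rfl | rfl
      · exact hfW
      · exact hJfW
    have hU2 : finrank ℝ U = 2 := orthonormal_pair_span_finrank hfnorm hJfnorm hfJf
    set W₂ : Submodule ℝ k := Uᗮ ⊓ W with hW₂
    have hW₂dim : finrank ℝ W₂ = 2 * n := by
      refine Submodule.finrank_add_inf_finrank_orthogonal' hUle ?_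
      rw [hU2, hWn]; ring
    have hmemW₂ : ∀ x : k, x ∈ W₂ ↔ (⟪f, x⟫ = 0 ∧ ⟪J f, x⟫ = 0) ∧ x ∈ W := by
      intro x
      rw [hW₂, Submodule.mem_inf, hU, mem_orth_span_pair_iff]
    have hJW₂ : ∀ x ∈ W₂, J x ∈ W₂ := by
      intro x hx
      rw [hmemW₂] at hx ⊢
      obtain ⟨⟨h1, h2⟩, hxW⟩ := hx
      refine ⟨⟨?_, ?_⟩, hJW x hxW⟩
      · have := hJorth (J f) x
        rw [hJ2, inner_neg_left] at this
        rw [← neg_eq_zero, this, h2]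
      · rw [hJorth, h1]
    have hAW₂ : ∀ x ∈ W₂, A x ∈ W₂ := by
      intro x hx
      rw [hmemW₂] at hx ⊢
      obtain ⟨⟨h1, h2⟩, hxW⟩ := hx
      refine ⟨⟨?_, ?_⟩, hAW x hxW⟩
      · have : ⟪A f, x⟫ = -⟪f, A x⟫ := hAskew f x
        rw [hAf, inner_smul_left] at this
        have h2' : ⟪f, A x⟫ = 0 := by
          have : (-μ : ℝ) * ⟪J f, x⟫ = -⟪f, A x⟫ := by simpa using this
          rw [h2, mul_zero] at this
          linarith
        rw [real_inner_comm] at h2'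
        rw [real_inner_comm]; exact h2'
      · have : ⟪A (J f), x⟫ = -⟪J f, A x⟫ := hAskew (J f) x
        rw [hAJf, inner_smul_left] at this
        have h1' : ⟪J f, A x⟫ = 0 := by
          have : (μ : ℝ) * ⟪f, x⟫ = -⟪J f, A x⟫ := by simpa using this
          rw [h1, mul_zero] at this
          linarith
        rw [real_inner_comm] at h1'
        rw [real_inner_comm]; exact h1'
    obtain ⟨e', bv', he'on, he'mem, he'J, he'A⟩ := ih W₂ hW₂dim hJW₂ hAW₂
    -- assemble
    set E : Fin (n + 1) × Bool → k :=
      fun p => Fin.cases (if p.2 then J f else f) (fun j => e' (j, p.2)) p.1 with hE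
    have hE0 : ∀ b, E (0, b) = if b then J f else f := fun b => rfl
    have hEs : ∀ (j : Fin n) (b : Bool), E (j.succ, b) = e' (j, b) := fun j b => rfl
    have he'W₂ : ∀ i, e' i ∈ W₂ := he'mem
    have hcross : ∀ i, ⟪f, e' i⟫ = 0 ∧ ⟪J f, e' i⟫ = 0 := by
      intro i
      have := (hmemW₂ (e' i)).mp (he'W₂ i)
      exact this.1
    refine ⟨E, Fin.cases μ bv', ?_, ?_, ?_, ?_⟩
    · rw [orthonormal_iff_ite]
      have hon' := orthonormal_iff_ite.mp he'on
      rintro ⟨i, bi⟩ ⟨j, bj⟩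
      induction i using Fin.cases with
      | zero =>
        induction j using Fin.cases with
        | zero =>
          cases bi <;> cases bj <;>
            simp [hE0, hfJf, hJx f, real_inner_self_eq_norm_sq, hfnorm, hJfnorm]
        | succ j =>
          have hc := hcross (j, bj)
          have hne : ((0 : Fin (n+1)), bi) ≠ (j.succ, bj) := by
            simp [Prod.ext_iff, (Fin.succ_ne_zero j).symm]
          cases bi <;> simp [hE0, hEs, hne, hc.1, hc.2]
      | succ i =>
        induction j using Fin.cases with
        | zero =>
          have hc := hcross (i, bi)
          have hne : ((i.succ : Fin (n+1)), bi) ≠ (0, bj) := by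
            simp [Prod.ext_iff, Fin.succ_ne_zero i]
          have h1 : ⟪e' (i, bi), f⟫ = 0 := by rw [real_inner_comm]; exact hc.1
          have h2 : ⟪e' (i, bi), J f⟫ = 0 := by rw [real_inner_comm]; exact hc.2
          cases bj <;> simp [hE0, hEs, hne, h1, h2]
        | succ j =>
          have := hon' (i, bi) (j, bj)
          simp only [hEs]
          rw [this]
          congr 1
          simp [Prod.ext_iff, Fin.succ_inj]
    · rintro ⟨i, bi⟩
      induction i using Fin.cases with
      | zero => cases bi <;> simp [hE0, hfW, hJfW]
      | succ i =>
        rw [hEs]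
        exact ((hmemW₂ _).mp (he'W₂ (i, bi))).2
    · intro l
      induction l using Fin.cases with
      | zero => simp [hE0]
      | succ j => rw [hEs, hEs]; exact he'J j
    · intro l
      induction l using Fin.cases with
      | zero =>
        exact ⟨by simp [hE0, hAf], by simp [hE0, hAJf]⟩
      | succ j =>
        have := he'A j
        refine ⟨?_, ?_⟩
        · rw [hEs, hEs]
          simpa using this.1
        · rw [hEs, hEs]
          simpa using this.2

end Aux

/-- Simultaneous normal form for a skew-symmetric `A` commuting with `J` and a
rank-2 skew-symmetric `H` commuting with `J` with `AᵗH + HA = 0`. -/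
theorem stmt_5 {k : Type*} [NormedAddCommGroup k] [InnerProductSpace ℝ k]
    [FiniteDimensional ℝ k]
    (m : ℕ) (hdim : Module.finrank ℝ k = 2 * m)
    (J A H : k →ₗ[ℝ] k)
    (hJ2 : ∀ x, J (J x) = -x)
    (hJorth : ∀ x y : k, ⟪J x, J y⟫ = ⟪x, y⟫)
    (hAskew : LinearMap.adjoint A = -A)
    (hAJ : A ∘ₗ J = J ∘ₗ A)
    (hHskew : LinearMap.adjoint H = -H)
    (hHJ : H ∘ₗ J = J ∘ₗ H)
    (hAH : (LinearMap.adjoint A) ∘ₗ H + H ∘ₗ A = 0)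
    (hrank : Module.finrank ℝ (LinearMap.range H) = 2) :
    A ∘ₗ H = H ∘ₗ A ∧
    ∃ e : Basis (Fin m × Bool) ℝ k, Orthonormal ℝ e ∧
      (∀ l : Fin m, J (e (l, false)) = e (l, true)) ∧
      (∃ bv : Fin m → ℝ, ∀ l : Fin m,
        A (e (l, false)) = -(bv l) • e (l, true) ∧
        A (e (l, true)) = bv l • e (l, false)) ∧
      (∃ (c : ℝ) (i₀ : Fin m), c ≠ 0 ∧
        H (e (i₀, false)) = c • e (i₀, true) ∧
        H (e (i₀, true)) = -c • e (i₀, false) ∧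
        ∀ l : Fin m, l ≠ i₀ → H (e (l, false)) = 0 ∧ H (e (l, true)) = 0) := by
  have hAskew' : ∀ x y : k, ⟪A x, y⟫ = -⟪x, A y⟫ := by
    intro x y
    have h := LinearMap.adjoint_inner_right A x y
    rw [hAskew] at h
    simp only [LinearMap.neg_apply, inner_neg_right] at h
    linarith
  have hHskew' : ∀ x y : k, ⟪H x, y⟫ = -⟪x, H y⟫ := by
    intro x y
    have h := LinearMap.adjoint_inner_right H x y
    rw [hHskew] at h
    simp only [LinearMap.neg_apply, inner_neg_right] at h
    linarith
  have hcomm : A ∘ₗ H = H ∘ₗ A := by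
    have h0 := hAH
    rw [hAskew, LinearMap.neg_comp] at h0
    exact neg_add_eq_zero.mp h0
  have hcommx : ∀ x, A (H x) = H (A x) := fun x => LinearMap.ext_iff.mp hcomm x
  have hHJx : ∀ x, H (J x) = J (H x) := fun x => LinearMap.ext_iff.mp hHJ x
  have hAJx : ∀ x, A (J x) = J (A x) := fun x => LinearMap.ext_iff.mp hAJ x
  have hJx : ∀ x : k, ⟪J x, x⟫ = 0 := by
    intro x
    have h1 : ⟪J (J x), J x⟫ = ⟪J x, x⟫ := hJorth (J x) x
    rw [hJ2, inner_neg_left] at h1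
    have h2 : ⟪x, J x⟫ = ⟪J x, x⟫ := real_inner_comm (J x) x
    linarith
  have hJnorm : ∀ x : k, ‖J x‖ = ‖x‖ := by
    intro x
    have := hJorth x x
    rw [real_inner_self_eq_norm_sq, real_inner_self_eq_norm_sq] at this
    nlinarith [norm_nonneg (J x), norm_nonneg x]
  refine ⟨hcomm, ?_⟩
  obtain ⟨m', rfl⟩ : ∃ m', m = m' + 1 := by
    have := Submodule.finrank_le (LinearMap.range H)
    rw [hrank, hdim] at this
    cases m with
    | zero => omega
    | succ m' => exact ⟨m', rfl⟩
  -- kernel is the orthogonal complement of the range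
  have hker : (LinearMap.ker H : Submodule ℝ k) = (LinearMap.range H)ᗮ := by
    ext x
    rw [LinearMap.mem_ker, Submodule.mem_orthogonal]
    constructor
    · rintro hx u ⟨y, rfl⟩
      have h := hHskew' y x
      rw [hx, inner_zero_right] at h
      simpa using h
    · intro hx
      have hall : ∀ y, ⟪y, H x⟫ = 0 := by
        intro y
        have h1 := hx (H y) ⟨y, rfl⟩
        have h2 := hHskew' y x
        linarith
      have := hall (H x)
      rwa [inner_self_eq_zero] at this
  have hkerdim : finrank ℝ (LinearMap.ker H) = 2 * m' := by
    have := LinearMap.finrank_range_add_finrank_ker H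
    rw [hrank, hdim] at this
    omega
  have hJker : ∀ x ∈ LinearMap.ker H, J x ∈ LinearMap.ker H := by
    intro x hx
    rw [LinearMap.mem_ker] at hx ⊢
    rw [hHJx, hx, map_zero]
  have hAker : ∀ x ∈ LinearMap.ker H, A x ∈ LinearMap.ker H := by
    intro x hx
    rw [LinearMap.mem_ker] at hx ⊢
    rw [← hcommx, hx, map_zero]
  have hJrange : ∀ x ∈ LinearMap.range H, J x ∈ LinearMap.range H := by
    rintro x ⟨y, rfl⟩
    exact ⟨J y, hHJx y⟩
  have hArange : ∀ x ∈ LinearMap.range H, A x ∈ LinearMap.range H := by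
    rintro x ⟨y, rfl⟩
    exact ⟨A y, (hcommx y).symm⟩
  -- pick a unit vector in the range
  have hneb : LinearMap.range H ≠ ⊥ := by
    intro hb
    rw [hb, finrank_bot] at hrank
    omega
  obtain ⟨v, hvmem, hv0⟩ := (Submodule.ne_bot_iff _).mp hneb
  obtain ⟨e₀, he₀mem, he₀norm⟩ : ∃ e₀ ∈ LinearMap.range H, ‖e₀‖ = 1 :=
    ⟨(‖v‖⁻¹ : ℝ) • v, Submodule.smul_mem _ _ hvmem, norm_smul_inv_norm hv0⟩
  obtain ⟨e₁, he₁def⟩ : ∃ e₁ : k, e₁ = J e₀ := ⟨_, rfl⟩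
  have he₁mem : e₁ ∈ LinearMap.range H := he₁def ▸ hJrange e₀ he₀mem
  have he₁norm : ‖e₁‖ = 1 := by rw [he₁def, hJnorm, he₀norm]
  have hinner01 : ⟪e₀, e₁⟫ = 0 := by rw [he₁def, real_inner_comm]; exact hJx e₀
  have hspan : Submodule.span ℝ ({e₀, e₁} : Set k) = LinearMap.range H := by
    apply Submodule.eq_of_le_of_finrank_eq
    · rw [Submodule.span_le]
      rintro x hx
      rcases hx with rfl | rfl
      · exact he₀mem
      · exact he₁mem
    · rw [orthonormal_pair_span_finrank he₀norm he₁norm hinner01, hrank]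
  have hcoords : ∀ w ∈ LinearMap.range H, ⟪e₀, w⟫ = 0 → ∃ c : ℝ, w = c • e₁ := by
    intro w hw hw0
    rw [← hspan] at hw
    rcases Submodule.mem_span_pair.mp hw with ⟨a, b, rfl⟩
    have ha : ⟪e₀, a • e₀ + b • e₁⟫ = a := by
      rw [inner_add_right, real_inner_smul_right, real_inner_smul_right, hinner01,
        real_inner_self_eq_norm_sq, he₀norm]
      ring
    rw [hw0] at ha
    exact ⟨b, by rw [← ha, zero_smul, zero_add]⟩
  have hskewself : ∀ (T : k →ₗ[ℝ] k), (∀ x y : k, ⟪T x, y⟫ = -⟪x, T y⟫) →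
      ∀ x : k, ⟪x, T x⟫ = 0 := by
    intro T hT x
    have h1 := hT x x
    have h2 := real_inner_comm (T x) x
    linarith
  obtain ⟨c, hHe₀⟩ := hcoords (H e₀) ⟨e₀, rfl⟩ (hskewself H hHskew' e₀)
  obtain ⟨b₀, hAe₀⟩ := hcoords (A e₀) (hArange e₀ he₀mem) (hskewself A hAskew' e₀)
  have hc0 : c ≠ 0 := by
    intro hc
    rw [hc, zero_smul] at hHe₀
    have : e₀ ∈ (LinearMap.range H)ᗮ := by
      rw [← hker, LinearMap.mem_ker]; exact hHe₀
    have := this e₀ he₀mem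
    rw [inner_self_eq_zero] at this
    rw [this, norm_zero] at he₀norm
    norm_num at he₀norm
  have hHe₁ : H e₁ = -c • e₀ := by
    rw [he₁def, hHJx, hHe₀, map_smul]
    rw [he₁def, hJ2, smul_neg, neg_smul]
  have hAe₁ : A e₁ = -b₀ • e₀ := by
    rw [he₁def, hAJx, hAe₀, map_smul]
    rw [he₁def, hJ2, smul_neg, neg_smul]
  -- normal form on the kernel
  obtain ⟨e', bv', he'on, he'mem, he'J, he'A⟩ :=
    aux_normal_form J A hJ2 hJorth hAskew' hAJx m' (LinearMap.ker H) hkerdim hJker hAker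
  have hcross : ∀ i, ⟪e₀, e' i⟫ = 0 ∧ ⟪e₁, e' i⟫ = 0 := by
    intro i
    have h := he'mem i
    rw [hker, Submodule.mem_orthogonal] at h
    exact ⟨h e₀ he₀mem, h e₁ he₁mem⟩
  set E : Fin (m' + 1) × Bool → k :=
    fun p => Fin.cases (if p.2 then e₁ else e₀) (fun j => e' (j, p.2)) p.1 with hE
  have hE0 : ∀ b, E (0, b) = if b then e₁ else e₀ := fun b => rfl
  have hEs : ∀ (j : Fin m') (b : Bool), E (j.succ, b) = e' (j, b) := fun j b => rfl
  have hEon : Orthonormal ℝ E := by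
    rw [orthonormal_iff_ite]
    have hon' := orthonormal_iff_ite.mp he'on
    rintro ⟨i, bi⟩ ⟨j, bj⟩
    induction i using Fin.cases with
    | zero =>
      induction j using Fin.cases with
      | zero =>
        cases bi <;> cases bj <;>
          simp [hE0, hinner01, real_inner_comm e₀ e₁, real_inner_self_eq_norm_sq,
            he₀norm, he₁norm]
      | succ j =>
        have hc := hcross (j, bj)
        have hne : ((0 : Fin (m' + 1)), bi) ≠ (j.succ, bj) := by
          simp [Prod.ext_iff, (Fin.succ_ne_zero j).symm]
        cases bi <;> simp [hE0, hEs, hne, hc.1, hc.2]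
    | succ i =>
      induction j using Fin.cases with
      | zero =>
        have hc := hcross (i, bi)
        have h1 : ⟪e' (i, bi), e₀⟫ = 0 := by rw [real_inner_comm]; exact hc.1
        have h2 : ⟪e' (i, bi), e₁⟫ = 0 := by rw [real_inner_comm]; exact hc.2
        have hne : ((i.succ : Fin (m' + 1)), bi) ≠ (0, bj) := by
          simp [Prod.ext_iff, Fin.succ_ne_zero i]
        cases bj <;> simp [hE0, hEs, hne, h1, h2]
      | succ j =>
        have := hon' (i, bi) (j, bj)
        simp only [hEs]
        rw [this]
        congr 1
        simp [Prod.ext_iff, Fin.succ_inj]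
  have hcard : Fintype.card (Fin (m' + 1) × Bool) = finrank ℝ k := by
    rw [Fintype.card_prod, Fintype.card_fin, Fintype.card_bool, hdim]
    ring
  set bas : Basis (Fin (m' + 1) × Bool) ℝ k :=
    basisOfLinearIndependentOfCardEqFinrank hEon.linearIndependent hcard with hbasdef
  have hbas : ⇑bas = E := coe_basisOfLinearIndependentOfCardEqFinrank _ _
  refine ⟨bas, ?_, ?_, ⟨Fin.cases (-b₀) bv', ?_⟩, c, 0, hc0, ?_, ?_, ?_⟩
  · rw [hbas]; exact hEon
  · intro l
    rw [hbas]
    induction l using Fin.cases with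
    | zero => simp [hE0, he₁def]
    | succ j => rw [hEs, hEs]; exact he'J j
  · intro l
    rw [hbas]
    induction l using Fin.cases with
    | zero =>
      constructor
      · simp [hE0, hAe₀]
      · simp [hE0, hAe₁]
    | succ j =>
      have := he'A j
      exact ⟨by rw [hEs, hEs]; simpa using this.1, by rw [hEs, hEs]; simpa using this.2⟩
  · rw [hbas, hE0, hE0]
    simpa using hHe₀
  · rw [hbas, hE0, hE0]
    simpa using hHe₁
  · intro l hl
    rw [hbas]
    obtain ⟨j, rfl⟩ := Fin.eq_succ_of_ne_zero hl
    rw [hEs, hEs]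
    have h := he'mem (j, false)
    have h' := he'mem (j, true)
    rw [LinearMap.mem_ker] at h h'
    exact ⟨h, h'⟩
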